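/- arXiv:2211.14028 — 2 statements merged into one kernel-verified Lean document; each statement's English description precedes it below -/
import Mathlib

section
/- Let A = A(Φ, Δ, Θ; a, m, Π, Γ) be a class of automata over the factored input alphabet X^a with internal alphabet Π and output alphabet Γ, where Δ is a finite class of semiautomata, and view A as a class of string functions on nonempty strings over X^a of length at most M. Then the growth of A satisfies G(A, ℓ) ≤ C(a, m) · |Δ| · G(Φ, ℓ·M) · G(Θ, ℓ), where C(a, m) is the binomial coefficient. -/
/-- A nonempty string over `σ`: first letter together with the remaining letters. -/
def NEStr (σ : Type*) : Type _ := σ × List σ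

/-- The underlying list of letters of a nonempty string. -/
def NEStr.toList {σ : Type*} (x : NEStr σ) : List σ := x.1 :: x.2

/-- The last letter of a nonempty string. -/
def NEStr.lastLetter {σ : Type*} (x : NEStr σ) : σ := x.2.getLastD x.1

/-- The growth of a class `F` of functions: `G(F, ℓ)` is the supremum, over all
sequences `x₁, …, x_ℓ` of domain elements, of the number of distinct patterns
`⟨f x₁, …, f x_ℓ⟩` for `f ∈ F`. -/
noncomputable def growth {α β : Type*} (F : Set (α → β)) (ℓ : ℕ) : ℕ∞ :=
  ⨆ xs : Fin ℓ → α, ((fun f => fun i => f (xs i)) '' F).encard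

/-- A class of string functions viewed as a class of functions on nonempty
strings of length at most `M` (by restricting the domain). -/
def restrictLen {σ γ : Type*} (M : ℕ) (F : Set (NEStr σ → γ)) :
    Set ({w : NEStr σ // (NEStr.toList w).length ≤ M} → γ) :=
  (fun f => fun w => f w.1) '' F

/-- A semiautomaton over the internal alphabet `Pi` with states `Q`. -/
structure Semiauto (Pi Q : Type*) where
  δ : Q → Pi → Q
  init : Q

/-- The function implemented by a semiautomaton. -/
def Semiauto.run {Pi Q : Type*} (D : Semiauto Pi Q) : List Pi → Q :=
  fun w => w.foldl D.δ D.init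

/-- An automaton over the factored input alphabet `X^a`. -/
structure FAut (X : Type*) (a m : ℕ) (Pi Q Γ : Type*) where
  J : Finset (Fin a)
  hJ : J.card = m
  φ : (Fin m → X) → Pi
  sa : Semiauto Pi Q
  θ : Q × (Fin m → X) → Γ

/-- The projection `π_J : X^a → X^m` onto the coordinates in `J` (in order). -/
def proj {X : Type*} {a m : ℕ} (J : Finset (Fin a)) (hJ : J.card = m)
    (σ : Fin a → X) : Fin m → X :=
  fun i => σ (J.orderIsoOfFin hJ i).val

/-- The string function implemented by an automaton over a factored alphabet:
`A(σ₁ … σₘ) = θ(δ(q_init, φ(π_J σ₁) ⋯ φ(π_J σₘ₋₁)), π_J σₘ)`. -/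
def FAut.run {X : Type*} {a m : ℕ} {Pi Q Γ : Type*} (A : FAut X a m Pi Q Γ) :
    NEStr (Fin a → X) → Γ :=
  fun w =>
    A.θ (A.sa.run ((NEStr.toList w).dropLast.map fun σ => A.φ (proj A.J A.hJ σ)),
         proj A.J A.hJ (NEStr.lastLetter w))

/-- The class `𝒜(Φ, Δ, Θ; a, m, Π, Γ)`. -/
def autClass {X : Type*} {a m : ℕ} {Pi Q Γ : Type*}
    (Φ : Set ((Fin m → X) → Pi)) (Δ : Set (Semiauto Pi Q))
    (Θ : Set (Q × (Fin m → X) → Γ)) : Set (FAut X a m Pi Q Γ) :=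
  {A | A.φ ∈ Φ ∧ A.sa ∈ Δ ∧ A.θ ∈ Θ}


lemma encard_biUnion_le' {ι β : Type*} (s : Set ι) (t : ι → Set β) (c : ℕ∞)
    (h : ∀ i ∈ s, (t i).encard ≤ c) : (⋃ i ∈ s, t i).encard ≤ s.encard * c := by
  rcases s.finite_or_infinite with hs | hs
  · refine Set.Finite.induction_on
      (motive := fun s _ => (∀ i ∈ s, (t i).encard ≤ c) →
        (⋃ i ∈ s, t i).encard ≤ s.encard * c) s hs (fun _ => by simp) ?_ h
    intro a s ha hsf ih h
    rw [Set.biUnion_insert]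
    refine (Set.encard_union_le _ _).trans ?_
    rw [Set.encard_insert_of_notMem ha, add_mul, one_mul, add_comm (Set.encard s * c) c]
    exact add_le_add (h a (Set.mem_insert _ _)) (ih fun i hi => h i (Set.mem_insert_of_mem _ hi))
  · rcases eq_or_ne c 0 with rfl | hc
    · have he : ∀ i ∈ s, t i = ∅ := fun i hi => Set.encard_eq_zero.mp (le_antisymm (h i hi) bot_le)
      have : (⋃ i ∈ s, t i) = ∅ := by
        simp only [Set.iUnion_eq_empty]
        intro i; by_cases hi : i ∈ s <;> simp [hi, he i]
      simp [this]
    · rw [hs.encard_eq, ENat.top_mul hc]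
      exact le_top

section Aux

variable {X : Type*} {a m : ℕ} {Pi Q Γ : Type*}

lemma div_lt_of_lt_mul' {k ℓ M : ℕ} (h : k < ℓ * M) : k / M < ℓ := by
  rcases Nat.eq_zero_or_pos M with hM | hM
  · rw [hM, Nat.mul_zero] at h; omega
  · exact (Nat.div_lt_iff_lt_mul hM).mpr h

/-- The `ℓ·M`-long sequence of projected letters determined by `xs` and `J`. -/
def zsFun (M ℓ : ℕ) (xs : Fin ℓ → {w : NEStr (Fin a → X) // (NEStr.toList w).length ≤ M})
    (J : Finset (Fin a)) (hJ : J.card = m) (k : Fin (ℓ * M)) : Fin m → X :=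
  proj J hJ ((NEStr.toList (xs ⟨k.val / M, div_lt_of_lt_mul' k.isLt⟩).1).dropLast.getD
    (k.val % M) ((xs ⟨k.val / M, div_lt_of_lt_mul' k.isLt⟩).1.1))

lemma idx_lt {M ℓ : ℕ} (i : Fin ℓ) {j : ℕ} (hj : j < M) : j + i.val * M < ℓ * M :=
  calc j + i.val * M < M + i.val * M := Nat.add_lt_add_right hj _
    _ = (i.val + 1) * M := by ring
    _ ≤ ℓ * M := Nat.mul_le_mul_right M i.isLt

lemma zsFun_eq (M ℓ : ℕ) (xs : Fin ℓ → {w : NEStr (Fin a → X) // (NEStr.toList w).length ≤ M})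
    (J : Finset (Fin a)) (hJ : J.card = m) (i : Fin ℓ) (j : ℕ) (hj : j < M) :
    zsFun M ℓ xs J hJ ⟨j + i.val * M, idx_lt i hj⟩ =
      proj J hJ ((NEStr.toList (xs i).1).dropLast.getD j ((xs i).1.1)) := by
  have hM : 0 < M := by omega
  have hdiv : (j + i.val * M) / M = i.val := by
    rw [Nat.add_mul_div_right _ _ hM, Nat.div_eq_of_lt hj, Nat.zero_add]
  have hmod : (j + i.val * M) % M = j := by
    rw [Nat.add_mul_mod_self_right, Nat.mod_eq_of_lt hj]
  unfold zsFun
  simp only [hmod]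
  exact congrArg (fun t : Fin ℓ =>
    proj J hJ ((NEStr.toList (xs t).1).dropLast.getD j ((xs t).1.1))) (Fin.ext hdiv)

/-- The `ℓ` inputs to the output functions, determined by `xs`, `J`, the
semiautomaton, and the pattern of the input function. -/
def inpFun (M ℓ : ℕ) (xs : Fin ℓ → {w : NEStr (Fin a → X) // (NEStr.toList w).length ≤ M})
    (J : Finset (Fin a)) (hJ : J.card = m) (sa : Semiauto Pi Q) (p : Fin (ℓ * M) → Pi)
    (i : Fin ℓ) : Q × (Fin m → X) :=
  (sa.run (List.ofFn (fun j : Fin ((NEStr.toList (xs i).1).dropLast.length) =>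
      p ⟨j.val + i.val * M, idx_lt i (by
        have hL := (xs i).2
        have hj := j.isLt
        have he := List.length_dropLast (xs := NEStr.toList (xs i).1)
        omega)⟩)),
   proj J hJ (NEStr.lastLetter (xs i).1))

lemma run_eq (M ℓ : ℕ) (xs : Fin ℓ → {w : NEStr (Fin a → X) // (NEStr.toList w).length ≤ M})
    (A : FAut X a m Pi Q Γ) (i : Fin ℓ) :
    FAut.run A (xs i).1 =
      A.θ (inpFun M ℓ xs A.J A.hJ A.sa (fun k => A.φ (zsFun M ℓ xs A.J A.hJ k)) i) := by
  have hlist : (NEStr.toList (xs i).1).dropLast.map (fun σ => A.φ (proj A.J A.hJ σ)) =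
      List.ofFn (fun j : Fin ((NEStr.toList (xs i).1).dropLast.length) =>
        A.φ (zsFun M ℓ xs A.J A.hJ ⟨j.val + i.val * M, idx_lt i (by
          have hL := (xs i).2
          have hj := j.isLt
          have he := List.length_dropLast (xs := NEStr.toList (xs i).1)
          omega)⟩)) := by
    apply List.ext_getElem
    · simp
    · intro n h1 h2
      simp only [List.getElem_map, List.getElem_ofFn]
      have hn : n < (NEStr.toList (xs i).1).dropLast.length := by
        simpa using h1
      have hnM : n < M := by
        have hL := (xs i).2
        have := hn
        rw [List.length_dropLast] at this
        omega
      rw [zsFun_eq M ℓ xs A.J A.hJ i n hnM,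
        List.getD_eq_getElem _ _ hn]
  show A.θ (A.sa.run ((NEStr.toList (xs i).1).dropLast.map
      (fun σ => A.φ (proj A.J A.hJ σ))), proj A.J A.hJ (NEStr.lastLetter (xs i).1)) = _
  rw [hlist]
  rfl

end Aux

/-- The growth of the class `𝒜(Φ, Δ, Θ; a, m, Π, Γ)`, viewed as a class of
string functions on nonempty strings of length at most `M`, is bounded as
`G(𝒜, ℓ) ≤ C(a, m) · |Δ| · G(Φ, ℓ·M) · G(Θ, ℓ)`. -/
theorem growth_autClass_le {X : Type*} {a m : ℕ} {Pi Q Γ : Type*}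
    (Φ : Set ((Fin m → X) → Pi)) (Δ : Set (Semiauto Pi Q))
    (Θ : Set (Q × (Fin m → X) → Γ)) (hΔ : Δ.Finite) (M ℓ : ℕ) :
    growth (restrictLen M ((fun A => FAut.run A) '' autClass (X := X) (a := a) Φ Δ Θ)) ℓ ≤
      (Nat.choose a m : ℕ∞) * Δ.encard * growth Φ (ℓ * M) * growth Θ ℓ := by
  rw [growth]
  refine iSup_le fun xs => ?_
  have hsub : ((fun f => fun i => f (xs i)) ''
      restrictLen M ((fun A => FAut.run A) '' autClass (X := X) (a := a) Φ Δ Θ)) ⊆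
      ⋃ J ∈ (Set.univ : Set {J : Finset (Fin a) // J.card = m}), ⋃ sa ∈ Δ,
        ⋃ p ∈ ((fun φ => fun k => φ (zsFun M ℓ xs J.1 J.2 k)) '' Φ),
          ((fun θ => fun i => θ (inpFun M ℓ xs J.1 J.2 sa p i)) '' Θ) := by
    rintro g hg
    obtain ⟨f, hf, rfl⟩ := hg
    obtain ⟨h, hh, rfl⟩ := hf
    obtain ⟨A, hA, rfl⟩ := hh
    refine Set.mem_biUnion (Set.mem_univ (⟨A.J, A.hJ⟩ : {J : Finset (Fin a) // J.card = m})) ?_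
    refine Set.mem_biUnion hA.2.1 ?_
    refine Set.mem_biUnion ⟨A.φ, hA.1, rfl⟩ ?_
    refine ⟨A.θ, hA.2.2, ?_⟩
    funext i
    exact (run_eq M ℓ xs A i).symm
  refine (Set.encard_mono hsub).trans ?_
  have h1 : (⋃ J ∈ (Set.univ : Set {J : Finset (Fin a) // J.card = m}), ⋃ sa ∈ Δ,
        ⋃ p ∈ ((fun φ => fun k => φ (zsFun M ℓ xs J.1 J.2 k)) '' Φ),
          ((fun θ => fun i => θ (inpFun M ℓ xs J.1 J.2 sa p i)) '' Θ)).encard ≤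
      (Set.univ : Set {J : Finset (Fin a) // J.card = m}).encard *
        (Δ.encard * (growth Φ (ℓ * M) * growth Θ ℓ)) := by
    refine encard_biUnion_le' _ _ _ fun J _ => ?_
    refine encard_biUnion_le' _ _ _ fun sa _ => ?_
    refine le_trans (encard_biUnion_le' _ _ (growth Θ ℓ) fun p _ => ?_)
      (mul_le_mul_left ?_ _)
    · exact le_iSup (fun ys : Fin ℓ → Q × (Fin m → X) =>
        ((fun θ => fun i => θ (ys i)) '' Θ).encard) (inpFun M ℓ xs J.1 J.2 sa p)
    · exact le_iSup (fun ys : Fin (ℓ * M) → (Fin m → X) =>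
        ((fun φ => fun k => φ (ys k)) '' Φ).encard) (zsFun M ℓ xs J.1 J.2)
  refine h1.trans ?_
  have huniv : (Set.univ : Set {J : Finset (Fin a) // J.card = m}).encard =
      (Nat.choose a m : ℕ∞) := by
    rw [Set.encard_univ, ENat.card_eq_coe_fintype_card]
    norm_cast
    simp [Fintype.card_finset_len]
  rw [huniv, mul_assoc, mul_assoc]
end

section
/- Let A = A(Φ, Δ, Θ; a, m, Π, Γ) be a class of automata over the factored input alphabet X^a with finite internal alphabet Π and finite output alphabet Γ, Δ a finite class of semiautomata, viewed as a class of string functions on nonempty strings of length at most M ≥ 1. Suppose Φ and Θ have finite (graph) dimensions dim(Φ) and dim(Θ), and set w = log₂ C(a, m) + log₂ |Δ| + dim(Φ) + dim(Θ), where C(a, m) is the binomial coefficient. If w ≥ 2, then the (graph) dimension of A satisfies dim(A) ≤ 2 · w · log₂(w · e · M · |Π| · |Γ|). -/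
/-- The binarisation of a class of functions: `f_bin(x, y) = [f x = y]`. -/
def binClass {α β : Type*} (F : Set (α → β)) : Set (α × β → Prop) :=
  (fun f => fun p => f p.1 = p.2) '' F

/-- The VC dimension of a class of `{0,1}`-valued functions: the largest `n`
with `G(H, n) = 2^n` (and `⊤` if no largest such `n` exists). -/
noncomputable def vcDim {α : Type*} (H : Set (α → Prop)) : ℕ∞ :=
  ⨆ n ∈ {n : ℕ | growth H n = 2 ^ n}, (n : ℕ∞)

/-- The (graph) dimension of a class of functions is the VC dimension of its
binarisation. -/
noncomputable def gdim {α β : Type*} (F : Set (α → β)) : ℕ∞ :=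
  vcDim (binClass F)

open Set

/-- Σ_{k ≤ d} C(N,k) ≤ (N+1)^d -/
lemma aux_sum_choose_le (N d : ℕ) : ∑ k ∈ Finset.Iic d, N.choose k ≤ (N + 1) ^ d := by
  induction d with
  | zero => rw [show Finset.Iic 0 = {0} from rfl]; simp
  | succ d ih =>
    have h1 : Finset.Iic (d+1) = insert (d+1) (Finset.Iic d) := by
      ext x; simp; omega
    rw [h1, Finset.sum_insert (by simp)]
    have h2 : N.choose (d+1) ≤ N * (N+1)^d :=
      le_trans (Nat.choose_le_pow N (d+1)) (by
        calc N ^ (d+1) = N * N ^ d := by ring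
        _ ≤ N * (N+1)^d := by
            exact Nat.mul_le_mul_left N (Nat.pow_le_pow_left (by omega) d))
    calc N.choose (d+1) + ∑ k ∈ Finset.Iic d, N.choose k
        ≤ N * (N+1)^d + (N+1)^d := Nat.add_le_add h2 ih
      _ = (N+1)^(d+1) := by ring

lemma encard_univ_fin_prop (h : ℕ) : (univ : Set (Fin h → Prop)).encard = 2 ^ h := by
  classical
  rw [Set.encard_univ]
  have : Nat.card (Fin h → Prop) = 2 ^ h := by
    rw [Nat.card_fun]
    simp [Nat.card_eq_fintype_card, Fintype.card_prop]
  rw [ENat.card_eq_coe_natCard, this]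
  push_cast
  rfl

lemma pattern_encard_le {γ : Type*} (H : Set (γ → Prop)) (n : ℕ) (xs : Fin n → γ) :
    ((fun f => fun i => f (xs i)) '' H).encard ≤ 2 ^ n := by
  rw [← encard_univ_fin_prop n]
  exact Set.encard_le_encard (subset_univ _)

lemma growth_le_two_pow {γ : Type*} (H : Set (γ → Prop)) (n : ℕ) :
    growth H n ≤ 2 ^ n :=
  iSup_le fun xs => pattern_encard_le H n xs

lemma le_vcDim_of_full {γ : Type*} (H : Set (γ → Prop)) {h : ℕ} (ys : Fin h → γ)
    (hfull : (fun f => fun j => f (ys j)) '' H = univ) : (h : ℕ∞) ≤ vcDim H := by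
  have hg : growth H h = 2 ^ h := by
    refine le_antisymm (growth_le_two_pow H h) ?_
    calc (2:ℕ∞)^h = ((fun f => fun j => f (ys j)) '' H).encard := by
          rw [hfull, encard_univ_fin_prop]
      _ ≤ growth H h := le_iSup (fun xs => ((fun f => fun j => f (xs j)) '' H).encard) ys
  exact le_iSup₂ (f := fun n (_ : n ∈ {n : ℕ | growth H n = 2 ^ n}) => (n : ℕ∞)) h hg

/-- Sauer–Shelah style bound: a class of `Prop`-valued functions of VC dimension `d`
realises at most `(|ι|+1)^d` patterns on any finite index family of points. -/
lemma prop_pattern_ncard_le {γ : Type*} (H : Set (γ → Prop)) (d : ℕ)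
    (hd : vcDim H = (d : ℕ∞)) {ι : Type*} [Fintype ι] (xs : ι → γ) :
    ((fun f => fun i => f (xs i)) '' H).ncard ≤ (Fintype.card ι + 1) ^ d := by
  classical
  set S := (fun f => fun i => f (xs i)) '' H with hS
  have hSfin : S.Finite := Set.toFinite S
  set e : (ι → Prop) → Finset ι := fun u => Finset.univ.filter (fun i => u i) with he
  have hmem_e : ∀ u i, i ∈ e u ↔ u i := by
    intro u i; simp [he]
  have hinj : Function.Injective e := by
    intro u v huv
    funext i
    exact propext ((hmem_e u i).symm.trans (huv ▸ hmem_e v i))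
  set 𝒜 : Finset (Finset ι) := hSfin.toFinset.image e with h𝒜
  have hcard : S.ncard = 𝒜.card := by
    rw [h𝒜, Finset.card_image_of_injective _ hinj, ← Set.ncard_coe_finset,
      Set.Finite.coe_toFinset]
  -- every set shattered by 𝒜 has size at most d
  have hvc : 𝒜.vcDim ≤ d := by
    apply Finset.sup_le
    intro s hs
    have hsh : 𝒜.Shatters s := Finset.mem_shatterer.1 hs
    set h := s.card with hh
    set ys : Fin h → γ := fun j => xs ((s.equivFin.symm j) : ι) with hys
    have hfull : (fun f => fun j => f (ys j)) '' H = univ := by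
      apply Set.eq_univ_of_forall
      rintro u
      set t : Finset ι :=
        (Finset.univ.filter (fun j : Fin h => u j)).image
          (fun j => ((s.equivFin.symm j) : ι)) with ht
      have hts : t ⊆ s := by
        intro x hx
        rw [ht] at hx
        obtain ⟨j, -, rfl⟩ := Finset.mem_image.1 hx
        exact (s.equivFin.symm j).2
      obtain ⟨b, hb, hsb⟩ := hsh hts
      rw [h𝒜] at hb
      obtain ⟨v, hv, rfl⟩ := Finset.mem_image.1 hb
      rw [Set.Finite.mem_toFinset, hS] at hv
      obtain ⟨f, hf, rfl⟩ := hv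
      refine ⟨f, hf, ?_⟩
      funext j
      apply propext
      set x : ι := ((s.equivFin.symm j) : ι) with hx
      have hxs : x ∈ s := (s.equivFin.symm j).2
      have h1 : f (ys j) ↔ x ∈ e (fun i => f (xs i)) := by
        have := (hmem_e (fun i => f (xs i)) x).symm
        simpa [hys, hx] using this
      have h2 : x ∈ e (fun i => f (xs i)) ↔ x ∈ t := by
        constructor
        · intro hxe
          rw [← hsb]; exact Finset.mem_inter.2 ⟨hxs, hxe⟩
        · intro hxt
          exact (Finset.mem_inter.1 (hsb ▸ hxt)).2
      have h3 : x ∈ t ↔ u j := by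
        rw [ht]
        constructor
        · intro hxt
          obtain ⟨j', hj', hjx⟩ := Finset.mem_image.1 hxt
          have : j' = j := by
            have := Subtype.coe_injective hjx
            exact s.equivFin.symm.injective this
          rw [← this]; exact (Finset.mem_filter.1 hj').2
        · intro hu
          exact Finset.mem_image.2 ⟨j, Finset.mem_filter.2 ⟨Finset.mem_univ _, hu⟩, rfl⟩
      exact h1.trans (h2.trans h3)
    have := le_vcDim_of_full H ys hfull
    rw [hd] at this
    exact_mod_cast this
  rw [hcard]
  calc 𝒜.card ≤ 𝒜.shatterer.card := Finset.card_le_card_shatterer 𝒜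
    _ ≤ ∑ k ∈ Finset.Iic 𝒜.vcDim, (Fintype.card ι).choose k :=
        Finset.card_shatterer_le_sum_vcDim
    _ ≤ ∑ k ∈ Finset.Iic d, (Fintype.card ι).choose k := by
        apply Finset.sum_le_sum_of_subset
        intro k hk
        simp only [Finset.mem_Iic] at *
        omega
    _ ≤ (Fintype.card ι + 1) ^ d := aux_sum_choose_le _ d

/-- Multiclass (graph-dimension) version via binarisation. -/
lemma mclass_pattern_ncard_le {α β : Type*} [Finite β] (F : Set (α → β)) (d : ℕ)
    (hd : gdim F = (d : ℕ∞)) {ι : Type*} [Fintype ι] (xs : ι → α) :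
    ((fun f => fun i => f (xs i)) '' F).ncard ≤ (Fintype.card ι * Nat.card β + 1) ^ d := by
  classical
  have : Fintype β := Fintype.ofFinite β
  set B : (ι → β) → (ι × β → Prop) := fun v => fun p => v p.1 = p.2 with hB
  have hBinj : Function.Injective B := by
    intro u v huv
    funext i
    have h1 : (u i = u i) = (v i = u i) := congrFun huv (i, u i)
    have : v i = u i := by rw [← h1]
    exact this.symm
  have h1 : ((fun f => fun i => f (xs i)) '' F).ncard
      = (B '' ((fun f => fun i => f (xs i)) '' F)).ncard :=
    (Set.ncard_image_of_injective _ hBinj).symm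
  have h2 : B '' ((fun f => fun i => f (xs i)) '' F)
      = (fun g => fun p : ι × β => g (xs p.1, p.2)) '' binClass F := by
    rw [binClass, Set.image_image, Set.image_image]
  have h3 := prop_pattern_ncard_le (binClass F) d hd
    (ι := ι × β) (fun p => (xs p.1, p.2))
  rw [h1, h2]
  calc ((fun g => fun p : ι × β => g (xs p.1, p.2)) '' binClass F).ncard
      ≤ (Fintype.card (ι × β) + 1) ^ d := h3
    _ = (Fintype.card ι * Nat.card β + 1) ^ d := by
        rw [Fintype.card_prod, Nat.card_eq_fintype_card]

/-- Fiberwise counting: if every fiber of `f` on `s` has at most `k` elements,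
then `|s| ≤ |f '' s| * k`. -/
lemma ncard_le_ncard_image_mul {γ κ : Type*} (s : Set γ) (hs : s.Finite) (f : γ → κ)
    (k : ℕ) (h : ∀ c, {x | x ∈ s ∧ f x = c}.ncard ≤ k) :
    s.ncard ≤ (f '' s).ncard * k := by
  classical
  set t := hs.toFinset with hts
  have himg : f '' s = ↑(t.image f) := by
    ext c
    simp [hts, Set.Finite.mem_toFinset]
  have hfib : ∀ c, {x | x ∈ s ∧ f x = c} = ↑(t.filter (fun x => f x = c)) := by
    intro c
    ext x
    simp [hts, Set.Finite.mem_toFinset]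
  have h1 : s.ncard = t.card := by
    rw [← Set.ncard_coe_finset, hts, Set.Finite.coe_toFinset]
  rw [h1, himg, Set.ncard_coe_finset]
  have h2 : t.card = ∑ c ∈ t.image f, (t.filter (fun x => f x = c)).card :=
    Finset.card_eq_sum_card_fiberwise (fun x hx => Finset.mem_image_of_mem f hx)
  rw [h2]
  calc ∑ c ∈ t.image f, (t.filter (fun x => f x = c)).card
      ≤ ∑ _c ∈ t.image f, k := by
        apply Finset.sum_le_sum
        intro c _
        have := h c
        rwa [hfib c, Set.ncard_coe_finset] at this
    _ = (t.image f).card * k := by rw [Finset.sum_const, smul_eq_mul]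

/-- The main counting bound for pattern sets of automata classes. -/
lemma main_count {X : Type*} {a m : ℕ} {Pi Q Γ : Type*} [Finite Pi] [Finite Γ]
    (Φ : Set ((Fin m → X) → Pi)) (Δ : Set (Semiauto Pi Q))
    (Θ : Set (Q × (Fin m → X) → Γ)) (hΔ : Δ.Finite)
    (dΦ dΘ : ℕ) (hΦdim : gdim Φ = (dΦ : ℕ∞)) (hΘdim : gdim Θ = (dΘ : ℕ∞))
    (M n : ℕ) (hM : 1 ≤ M) (hn : 0 < n)
    (str : Fin n → NEStr (Fin a → X)) (hstr : ∀ i, ((str i).toList).length ≤ M) :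
    ((fun A => fun i => FAut.run A (str i)) '' autClass Φ Δ Θ).ncard ≤
      Nat.choose a m * Δ.ncard * (n * M * Nat.card Pi + 1) ^ dΦ
        * (n * Nat.card Γ + 1) ^ dΘ := by
  classical
  rcases Set.eq_empty_or_nonempty (autClass Φ Δ Θ) with hcl | ⟨A0, hA0⟩
  · rw [hcl]; simp
  haveI hXm : Nonempty (Fin m → X) := ⟨proj A0.J A0.hJ (str ⟨0, hn⟩).1⟩
  set projOf : Finset (Fin a) → (Fin a → X) → (Fin m → X) :=
    fun J σ => if h : J.card = m then proj J h σ else Classical.arbitrary _ with hprojOf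
  set letF : Fin n × Fin M → (Fin a → X) :=
    fun q => ((str q.1).toList.dropLast).getD q.2 ((str q.1).1) with hletF
  have hlt : ∀ i : Fin n, ((str i).toList.dropLast).length < M := by
    intro i
    have h1 := hstr i
    have h2 : (str i).toList.length = (str i).2.length + 1 := by simp [NEStr.toList]
    rw [List.length_dropLast]
    omega
  set stList : (Fin n × Fin M → Pi) → Fin n → List Pi :=
    fun v i => List.ofFn
      (fun j : Fin ((str i).toList.dropLast.length) => v (i, ⟨j, j.2.trans (hlt i)⟩))
    with hstList
  set ptTh : (Finset (Fin a) × Semiauto Pi Q × (Fin n × Fin M → Pi)) →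
      Fin n → Q × (Fin m → X) :=
    fun t i => (t.2.1.run (stList t.2.2 i), projOf t.1 ((str i).lastLetter)) with hptTh
  set Sig : FAut X a m Pi Q Γ →
      (Finset (Fin a) × Semiauto Pi Q × (Fin n × Fin M → Pi)) × (Fin n → Γ) :=
    fun A => ((A.J, A.sa, fun q => A.φ (projOf A.J (letF q))), fun i => A.run (str i))
    with hSig
  have hproj : ∀ (A : FAut X a m Pi Q Γ) σ, projOf A.J σ = proj A.J A.hJ σ := by
    intro A σ
    rw [hprojOf]
    exact dif_pos A.hJ
  -- determinism: the run is a function of the signature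
  have hdet : ∀ (A : FAut X a m Pi Q Γ) (i : Fin n),
      A.run (str i) = A.θ (ptTh (Sig A).1 i) := by
    intro A i
    have hlist : ((str i).toList.dropLast).map (fun σ => A.φ (proj A.J A.hJ σ))
        = stList (fun q => A.φ (projOf A.J (letF q))) i := by
      apply List.ext_getElem
      · simp [hstList]
      · intro j h1 h2
        simp only [hstList, List.getElem_map, List.getElem_ofFn]
        have hj : j < ((str i).toList.dropLast).length := by simpa using h1
        have key : ∀ y : Fin M, (y : ℕ) = j →
            A.φ (projOf A.J (letF (i, y)))
              = A.φ (proj A.J A.hJ (((str i).toList.dropLast)[j])) := by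
          rintro ⟨y, hy⟩ rfl
          rw [hproj]
          exact congrArg (fun z => A.φ (proj A.J A.hJ z)) (List.getD_eq_getElem _ _ hj)
        exact (key _ rfl).symm
    simp only [FAut.run, hptTh, hSig]
    rw [hlist, hproj]
  set G := Sig '' autClass Φ Δ Θ with hG
  have hGfin : G.Finite := by
    apply Set.Finite.subset
      (Set.Finite.prod
        (Set.Finite.prod (Set.finite_univ)
          (Set.Finite.prod hΔ (Set.finite_univ))) (Set.finite_univ))
    rintro _ ⟨A, hA, rfl⟩
    exact ⟨⟨trivial, hA.2.1, trivial⟩, trivial⟩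
  have hP : (fun A => fun i => FAut.run A (str i)) '' autClass Φ Δ Θ = Prod.snd '' G := by
    rw [hG, Set.image_image]
  rw [hP]
  have step1 : (Prod.snd '' G).ncard ≤ G.ncard := Set.ncard_image_le hGfin
  -- level 2 : count θ-patterns fiberwise over the signature
  have step2 : G.ncard ≤ (Prod.fst '' G).ncard * (n * Nat.card Γ + 1) ^ dΘ := by
    apply ncard_le_ncard_image_mul G hGfin Prod.fst
    intro t
    have hsub : (fun x : (Finset (Fin a) × Semiauto Pi Q × (Fin n × Fin M → Pi)) × (Fin n → Γ)
          => x.2) '' {x | x ∈ G ∧ x.1 = t}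
        ⊆ (fun θ => fun i => θ (ptTh t i)) '' Θ := by
      rintro _ ⟨x, ⟨hxG, hxt⟩, rfl⟩
      rw [hG] at hxG
      obtain ⟨A, hA, rfl⟩ := hxG
      refine ⟨A.θ, hA.2.2, ?_⟩
      funext i
      rw [← hxt]
      exact (hdet A i).symm
    have hinj : Set.InjOn
        (fun x : (Finset (Fin a) × Semiauto Pi Q × (Fin n × Fin M → Pi)) × (Fin n → Γ)
          => x.2) {x | x ∈ G ∧ x.1 = t} := by
      rintro ⟨u1, v1⟩ ⟨h1, h1'⟩ ⟨u2, v2⟩ ⟨h2, h2'⟩ h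
      simp only at h h1' h2'
      rw [Prod.ext_iff]
      exact ⟨h1'.trans h2'.symm, h⟩
    calc {x | x ∈ G ∧ Prod.fst x = t}.ncard
        = ((fun x : (Finset (Fin a) × Semiauto Pi Q × (Fin n × Fin M → Pi)) × (Fin n → Γ)
            => x.2) '' {x | x ∈ G ∧ x.1 = t}).ncard :=
          (Set.ncard_image_of_injOn hinj).symm
      _ ≤ ((fun θ => fun i => θ (ptTh t i)) '' Θ).ncard :=
          Set.ncard_le_ncard hsub (Set.toFinite _)
      _ ≤ (Fintype.card (Fin n) * Nat.card Γ + 1) ^ dΘ :=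
          mclass_pattern_ncard_le Θ dΘ hΘdim _
      _ = (n * Nat.card Γ + 1) ^ dΘ := by rw [Fintype.card_fin]
  -- level 3 : count φ-patterns fiberwise over (J, D)
  have step3 : (Prod.fst '' G).ncard ≤
      (Nat.choose a m * Δ.ncard) * (n * M * Nat.card Pi + 1) ^ dΦ := by
    have h3 := ncard_le_ncard_image_mul (Prod.fst '' G) (hGfin.image _)
      (fun u : Finset (Fin a) × Semiauto Pi Q × (Fin n × Fin M → Pi) => (u.1, u.2.1))
      ((n * M * Nat.card Pi + 1) ^ dΦ) ?fib
    case fib =>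
      intro c
      have hsub : (fun u : Finset (Fin a) × Semiauto Pi Q × (Fin n × Fin M → Pi) => u.2.2)
          '' {u | u ∈ Prod.fst '' G ∧ (u.1, u.2.1) = c}
          ⊆ (fun φ => fun q => φ (projOf c.1 (letF q))) '' Φ := by
        rintro _ ⟨u, ⟨huG, huc⟩, rfl⟩
        obtain ⟨x, hxG, rfl⟩ := huG
        rw [hG] at hxG
        obtain ⟨A, hA, rfl⟩ := hxG
        refine ⟨A.φ, hA.1, ?_⟩
        have hc1 : c.1 = A.J := by rw [← huc]
        rw [hc1]
      have hinj : Set.InjOn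
          (fun u : Finset (Fin a) × Semiauto Pi Q × (Fin n × Fin M → Pi) => u.2.2)
          {u | u ∈ Prod.fst '' G ∧ (u.1, u.2.1) = c} := by
        rintro ⟨J1, s1, v1⟩ ⟨-, h1⟩ ⟨J2, s2, v2⟩ ⟨-, h2⟩ h
        have e1 : (J1, s1) = (J2, s2) := h1.trans h2.symm
        simp only [Prod.mk.injEq] at e1 h ⊢
        exact ⟨e1.1, e1.2, h⟩
      calc {u | u ∈ Prod.fst '' G ∧ (u.1, u.2.1) = c}.ncard
          = ((fun u : Finset (Fin a) × Semiauto Pi Q × (Fin n × Fin M → Pi) => u.2.2)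
              '' {u | u ∈ Prod.fst '' G ∧ (u.1, u.2.1) = c}).ncard :=
            (Set.ncard_image_of_injOn hinj).symm
        _ ≤ ((fun φ => fun q => φ (projOf c.1 (letF q))) '' Φ).ncard :=
            Set.ncard_le_ncard hsub (Set.toFinite _)
        _ ≤ (Fintype.card (Fin n × Fin M) * Nat.card Pi + 1) ^ dΦ :=
            mclass_pattern_ncard_le Φ dΦ hΦdim _
        _ = (n * M * Nat.card Pi + 1) ^ dΦ := by
            rw [Fintype.card_prod, Fintype.card_fin, Fintype.card_fin]
    have h4 : (fun u : Finset (Fin a) × Semiauto Pi Q × (Fin n × Fin M → Pi) => (u.1, u.2.1))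
        '' (Prod.fst '' G)
        ⊆ ((((Finset.powersetCard m Finset.univ) ×ˢ hΔ.toFinset :
            Finset (Finset (Fin a) × Semiauto Pi Q))) : Set (Finset (Fin a) × Semiauto Pi Q)) := by
      rintro _ ⟨_, ⟨x, hxG, rfl⟩, rfl⟩
      rw [hG] at hxG
      obtain ⟨A, hA, rfl⟩ := hxG
      simp [hSig, Finset.mem_powersetCard_univ, A.hJ, Set.Finite.mem_toFinset, hA.2.1]
    have h5 : ((fun u : Finset (Fin a) × Semiauto Pi Q × (Fin n × Fin M → Pi) => (u.1, u.2.1))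
        '' (Prod.fst '' G)).ncard ≤ Nat.choose a m * Δ.ncard := by
      refine le_trans (Set.ncard_le_ncard h4 (Finset.finite_toSet _)) ?_
      rw [Set.ncard_coe_finset, Finset.card_product, Finset.card_powersetCard,
        Finset.card_univ, Fintype.card_fin]
      have hΔc : Δ.ncard = hΔ.toFinset.card := by
        rw [← Set.ncard_coe_finset, hΔ.coe_toFinset]
      rw [hΔc]
    exact le_trans h3 (Nat.mul_le_mul_right _ h5)
  calc (Prod.snd '' G).ncard ≤ G.ncard := step1
    _ ≤ (Prod.fst '' G).ncard * (n * Nat.card Γ + 1) ^ dΘ := step2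
    _ ≤ ((Nat.choose a m * Δ.ncard) * (n * M * Nat.card Pi + 1) ^ dΦ)
          * (n * Nat.card Γ + 1) ^ dΘ :=
        Nat.mul_le_mul_right _ step3
    _ = Nat.choose a m * Δ.ncard * (n * M * Nat.card Pi + 1) ^ dΦ
          * (n * Nat.card Γ + 1) ^ dΘ := by ring

set_option maxHeartbeats 1000000 in
open Real in
/-- The real-analytic endgame: solving the recursive dimension bound. -/
lemma real_endgame (n C D M p g dΦ dΘ : ℕ) (hC : 1 ≤ C) (hD : 1 ≤ D) (hM : 1 ≤ M)
    (hp : 1 ≤ p) (hg : 1 ≤ g) (hn : 1 ≤ n) (w : ℝ)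
    (hw : w = logb 2 C + logb 2 D + dΦ + dΘ) (hw2 : 2 ≤ w)
    (hcount : 2 ^ n ≤ C * D * (n * M * p + 1) ^ dΦ * (n * g + 1) ^ dΘ) :
    (n : ℝ) ≤ 2 * w * logb 2 (w * Real.exp 1 * M * p * g) := by
  have he1 : (2.7182818283 : ℝ) < Real.exp 1 := Real.exp_one_gt_d9
  have he2 : Real.exp 1 < 2.7182818286 := Real.exp_one_lt_d9
  have hl2a : (0.6931471803 : ℝ) < Real.log 2 := Real.log_two_gt_d9
  have hl2b : Real.log 2 < 0.6931471808 := Real.log_two_lt_d9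
  have hl2p : (0:ℝ) < Real.log 2 := by linarith
  obtain ⟨c, hc⟩ : ∃ c : ℝ, c = Real.exp 1 * M * p * g := ⟨_, rfl⟩
  have hM1 : (1:ℝ) ≤ M := by exact_mod_cast hM
  have hp1 : (1:ℝ) ≤ p := by exact_mod_cast hp
  have hg1 : (1:ℝ) ≤ g := by exact_mod_cast hg
  have hn1 : (1:ℝ) ≤ n := by exact_mod_cast hn
  have hC1 : (1:ℝ) ≤ C := by exact_mod_cast hC
  have hD1 : (1:ℝ) ≤ D := by exact_mod_cast hD
  have hMp : (1:ℝ) ≤ (M:ℝ) * p := by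
    clear * - hM1 hp1
    nlinarith [mul_nonneg (sub_nonneg.2 hM1) (sub_nonneg.2 hp1)]
  have hMpg : (1:ℝ) ≤ (M:ℝ) * p * g := by
    clear * - hMp hg1
    nlinarith [mul_nonneg (sub_nonneg.2 hMp) (sub_nonneg.2 hg1)]
  have hceq : c = Real.exp 1 * ((M:ℝ) * p * g) := by rw [hc]; ring
  have hce : Real.exp 1 ≤ c := by
    rw [hceq]
    clear * - hMpg
    nlinarith [mul_nonneg (Real.exp_pos 1).le (sub_nonneg.2 hMpg), Real.exp_pos 1]
  have hc2 : (2:ℝ) ≤ c := by clear * - he1 hce; linarith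
  have hc0 : (0:ℝ) < c := by clear * - hc2; linarith
  have hw0 : (0:ℝ) < w := by clear * - hw2; linarith
  have hn0 : (0:ℝ) < n := by clear * - hn1; linarith
  have hnMp : (1:ℝ) ≤ (n:ℝ) * M * p := by
    clear * - hn1 hMp
    nlinarith [mul_nonneg (sub_nonneg.2 hn1) (sub_nonneg.2 hMp)]
  have hng : (1:ℝ) ≤ (n:ℝ) * g := by
    clear * - hn1 hg1
    nlinarith [mul_nonneg (sub_nonneg.2 hn1) (sub_nonneg.2 hg1)]
  have hcneq : c * n = Real.exp 1 * ((n:ℝ) * M * p * g) := by rw [hc]; ring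
  have hb1 : ((n * M * p + 1 : ℕ) : ℝ) ≤ c * n := by
    clear * - hcneq hnMp hg1 he1
    push_cast
    rw [hcneq]
    have A1 : (n:ℝ) * M * p ≤ (n:ℝ) * M * p * g := by
      nlinarith [mul_nonneg (by positivity : (0:ℝ) ≤ (n:ℝ) * M * p) (sub_nonneg.2 hg1)]
    have A2 : 2 * ((n:ℝ) * M * p * g) ≤ Real.exp 1 * ((n:ℝ) * M * p * g) := by
      apply mul_le_mul_of_nonneg_right (by linarith)
      positivity
    linarith
  have hb2 : ((n * g + 1 : ℕ) : ℝ) ≤ c * n := by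
    clear * - hcneq hng hMp he1
    push_cast
    rw [hcneq]
    have A1 : (n:ℝ) * g ≤ (n:ℝ) * M * p * g := by
      have h := mul_le_mul_of_nonneg_right hMp (by positivity : (0:ℝ) ≤ (n:ℝ) * g)
      calc (n:ℝ) * g = 1 * ((n:ℝ) * g) := by ring
        _ ≤ (M:ℝ) * p * ((n:ℝ) * g) := h
        _ = (n:ℝ) * M * p * g := by ring
    have A2 : 2 * ((n:ℝ) * M * p * g) ≤ Real.exp 1 * ((n:ℝ) * M * p * g) := by
      apply mul_le_mul_of_nonneg_right (by linarith)
      positivity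
    linarith
  have hcn0 : (0:ℝ) < c * n := mul_pos hc0 hn0
  have hcn2 : (2:ℝ) ≤ c * n := by
    clear * - hc2 hn1 hc0
    have := mul_le_mul hc2 hn1 (by norm_num) hc0.le
    linarith
  have hcount' : (2:ℝ) ^ n ≤ (C : ℝ) * D * (c * n) ^ (dΦ + dΘ) := by
    have hcast : ((2:ℕ):ℝ) ^ n ≤ ((C:ℝ) * D) * (((n * M * p + 1 : ℕ):ℝ)) ^ dΦ
        * (((n * g + 1 : ℕ):ℝ)) ^ dΘ := by exact_mod_cast hcount
    clear * - hcast hb1 hb2 hC1 hD1 hcn0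
    have h1 : (((n * M * p + 1 : ℕ):ℝ)) ^ dΦ ≤ (c * n) ^ dΦ :=
      pow_le_pow_left₀ (by positivity) hb1 dΦ
    have h2 : (((n * g + 1 : ℕ):ℝ)) ^ dΘ ≤ (c * n) ^ dΘ :=
      pow_le_pow_left₀ (by positivity) hb2 dΘ
    have hCD : (0:ℝ) < (C:ℝ) * D :=
      mul_pos (by linarith) (by linarith)
    calc (2:ℝ) ^ n = ((2:ℕ):ℝ) ^ n := by norm_num
      _ ≤ ((C:ℝ) * D) * (((n * M * p + 1 : ℕ):ℝ)) ^ dΦ * (((n * g + 1 : ℕ):ℝ)) ^ dΘ := hcast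
      _ ≤ ((C:ℝ) * D) * (c * n) ^ dΦ * (c * n) ^ dΘ :=
          mul_le_mul (mul_le_mul_of_nonneg_left h1 hCD.le) h2 (by positivity)
            (mul_nonneg hCD.le (pow_nonneg hcn0.le _))
      _ = (C : ℝ) * D * (c * n) ^ (dΦ + dΘ) := by rw [pow_add]; ring
  -- take logarithms
  have hL : (n : ℝ) ≤ w * logb 2 (c * n) := by
    have hmon := Real.logb_le_logb_of_le (b := 2) one_lt_two (by positivity) hcount'
    have hlhs : logb 2 ((2:ℝ) ^ n) = n := by
      rw [Real.logb_pow, Real.logb_self_eq_one one_lt_two]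
      ring
    have hrhs : logb 2 ((C : ℝ) * D * (c * n) ^ (dΦ + dΘ))
        = logb 2 C + logb 2 D + ((dΦ : ℝ) + dΘ) * logb 2 (c * n) := by
      rw [Real.logb_mul (by positivity) (pow_ne_zero _ (ne_of_gt hcn0)),
        Real.logb_mul (by positivity) (by positivity), Real.logb_pow]
      push_cast
      ring
    rw [hlhs, hrhs] at hmon
    have hLcn : 1 ≤ logb 2 (c * n) := by
      have h := Real.logb_le_logb_of_le (b := 2) one_lt_two (by norm_num) hcn2
      rwa [Real.logb_self_eq_one one_lt_two] at h
    have hlC : 0 ≤ logb 2 (C : ℝ) := Real.logb_nonneg one_lt_two hC1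
    have hlD : 0 ≤ logb 2 (D : ℝ) := Real.logb_nonneg one_lt_two hD1
    rw [hw]
    clear * - hmon hLcn hlC hlD
    nlinarith [mul_le_mul_of_nonneg_right hlC (by linarith : (0:ℝ) ≤ logb 2 (c*n) - 1),
      mul_le_mul_of_nonneg_right hlD (by linarith : (0:ℝ) ≤ logb 2 (c*n) - 1),
      mul_nonneg (by positivity : (0:ℝ) ≤ ((dΦ:ℝ) + dΘ)) (by linarith : (0:ℝ) ≤ logb 2 (c*n) - 1)]
  -- rewrite the target and argue by contradiction
  have htarget : w * Real.exp 1 * (M:ℝ) * p * g = c * w := by rw [hc]; ring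
  rw [htarget]
  by_contra hcon
  push_neg at hcon
  obtain ⟨L, hLdef⟩ : ∃ L : ℝ, L = logb 2 (c * w) := ⟨_, rfl⟩
  obtain ⟨t, ht⟩ : ∃ t : ℝ, t = (n : ℝ) / w := ⟨_, rfl⟩
  have ht0 : 0 < t := by rw [ht]; exact div_pos hn0 hw0
  have htn : (n : ℝ) = w * t := by
    rw [ht]
    field_simp
  have hcw0 : (0:ℝ) < c * w := mul_pos hc0 hw0
  have hsplit : logb 2 (c * n) = L + logb 2 t := by
    have hh : c * n = (c * w) * t := by rw [htn]; ring
    rw [hh, Real.logb_mul (ne_of_gt hcw0) (ne_of_gt ht0), hLdef]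
  have htL : t ≤ L + logb 2 t := by
    have h := hL
    rw [hsplit, htn] at h
    clear * - h hw0
    nlinarith
  have ht2L : 2 * L < t := by
    have h : 2 * w * L < w * t := by rw [← htn, hLdef]; exact hcon
    clear * - h hw0
    nlinarith
  have hLlb : 1 + 1 / Real.log 2 ≤ L := by
    have h2e : 2 * Real.exp 1 ≤ c * w := by
      have h := mul_le_mul hce hw2 (by norm_num) hc0.le
      clear * - h
      linarith
    have h1 : logb 2 (2 * Real.exp 1) ≤ L := by
      rw [hLdef]
      exact Real.logb_le_logb_of_le one_lt_two (by positivity) h2e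
    have h2 : logb 2 (2 * Real.exp 1) = 1 + 1 / Real.log 2 := by
      rw [Real.logb_mul (by norm_num) (by positivity), Real.logb_self_eq_one one_lt_two]
      unfold Real.logb
      rw [Real.log_exp]
    clear * - h1 h2
    linarith [h2 ▸ h1]
  have hinv144 : (1.44 : ℝ) < 1 / Real.log 2 := by
    rw [lt_div_iff₀ hl2p]
    clear * - hl2b
    linarith
  have htbig : (4.88:ℝ) < t := by
    clear * - ht2L hLlb hinv144
    linarith
  -- t/2 < logb 2 t hence (t/2) * log 2 < log t
  have hlogbt : t / 2 < logb 2 t := by clear * - htL ht2L; linarith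
  have hth : t / 2 * Real.log 2 < Real.log t := by
    have h := (lt_div_iff₀ hl2p).1 (by rw [Real.logb] at hlogbt; exact hlogbt)
    clear * - h
    linarith
  -- log t ≤ t / exp 2 + 1
  have hE : Real.exp 2 = Real.exp 1 * Real.exp 1 := by
    rw [← Real.exp_add]; norm_num
  have hlogt : Real.log t ≤ t / Real.exp 2 + 1 := by
    have h1 := Real.log_le_sub_one_of_pos (x := t / Real.exp 2) (by positivity)
    rw [Real.log_div (by linarith) (by positivity), Real.log_exp] at h1
    clear * - h1
    linarith
  have hE1 : (7.389 : ℝ) < Real.exp 2 := by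
    rw [hE]
    clear * - he1
    nlinarith [sq_nonneg (Real.exp 1 - 2.7182818283)]
  have hE2 : Real.exp 2 < 7.39 := by
    rw [hE]
    clear * - he1 he2
    nlinarith [mul_lt_mul'' he2 he2 (by linarith) (by linarith)]
  have hd1 : t / Real.exp 2 < t / 7.389 :=
    div_lt_div_of_pos_left (by linarith) (by norm_num) hE1
  have hfin1 : t * 0.6931471803 < t * Real.log 2 :=
    mul_lt_mul_of_pos_left hl2a (by linarith)
  clear * - hth hlogt hd1 hfin1 htbig
  ring_nf at hth hd1 hfin1 hlogt
  linarith

lemma one_le_mul_aux {x y : ℝ} (hx : 1 ≤ x) (hy : 1 ≤ y) : 1 ≤ x * y := by nlinarith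

set_option maxHeartbeats 1000000 in
/-- Sample-complexity dimension bound for a class of automata: with
`w = log₂ C(a,m) + log₂ |Δ| + dim Φ + dim Θ ≥ 2`, the (graph) dimension of the
class `𝒜(Φ, Δ, Θ; a, m, Π, Γ)`, viewed as a class of string functions on
nonempty strings of length at most `M ≥ 1`, is at most
`2 · w · log₂(w · e · M · |Π| · |Γ|)`. -/
theorem gdim_autClass_le {X : Type*} {a m : ℕ} {Pi Q Γ : Type*}
    [Finite Pi] [Finite Γ]
    (Φ : Set ((Fin m → X) → Pi)) (Δ : Set (Semiauto Pi Q))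
    (Θ : Set (Q × (Fin m → X) → Γ)) (hΔ : Δ.Finite)
    (M : ℕ) (hM : 1 ≤ M)
    (dΦ dΘ : ℕ) (hΦdim : gdim Φ = (dΦ : ℕ∞)) (hΘdim : gdim Θ = (dΘ : ℕ∞))
    (w : ℝ)
    (hw : w = Real.logb 2 (Nat.choose a m) + Real.logb 2 Δ.ncard + dΦ + dΘ)
    (hw2 : 2 ≤ w) :
    (gdim (restrictLen M ((fun A => FAut.run A) '' autClass (X := X) (a := a) Φ Δ Θ)) : ENNReal) ≤
      ENNReal.ofReal
        (2 * w * Real.logb 2 (w * Real.exp 1 * M * Nat.card Pi * Nat.card Γ)) := by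
  classical
  set F' := restrictLen M ((fun A => FAut.run A) '' autClass (X := X) (a := a) Φ Δ Θ) with hF'
  set R : ℝ := 2 * w * Real.logb 2 (w * Real.exp 1 * M * Nat.card Pi * Nat.card Γ) with hR
  have hR0 : 0 ≤ R := by
    rcases Nat.eq_zero_or_pos (Nat.card Pi) with hp0 | hp1
    · rw [hR, hp0]; simp
    rcases Nat.eq_zero_or_pos (Nat.card Γ) with hg0 | hg1
    · rw [hR, hg0]; simp
    have harg : (1:ℝ) ≤ w * Real.exp 1 * M * Nat.card Pi * Nat.card Γ := by
      have h1 : (1:ℝ) ≤ w := by linarith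
      have h2 : (1:ℝ) ≤ Real.exp 1 := by nlinarith [Real.exp_one_gt_d9]
      have h3 : (1:ℝ) ≤ (M:ℝ) := by exact_mod_cast hM
      have h4 : (1:ℝ) ≤ (Nat.card Pi : ℝ) := by exact_mod_cast hp1
      have h5 : (1:ℝ) ≤ (Nat.card Γ : ℝ) := by exact_mod_cast hg1
      exact one_le_mul_aux (one_le_mul_aux (one_le_mul_aux (one_le_mul_aux h1 h2) h3) h4) h5
    have := Real.logb_nonneg one_lt_two harg
    rw [hR]
    nlinarith
  have hkey : ∀ n ∈ {n : ℕ | growth (binClass F') n = 2 ^ n}, (n : ℝ) ≤ R := by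
    intro n hn
    rcases Nat.eq_zero_or_pos n with rfl | hn1
    · exact_mod_cast hR0
    have hgs : growth (binClass F') n = 2 ^ n := hn
    -- extract a witness family of sample points
    have hlt : ((2 ^ n - 1 : ℕ) : ℕ∞) < growth (binClass F') n := by
      rw [hgs]
      have h1 : ((2 ^ n - 1 : ℕ) : ℕ∞) < ((2 ^ n : ℕ) : ℕ∞) := by
        have h0 : (1:ℕ) ≤ 2 ^ n := Nat.one_le_two_pow
        exact_mod_cast Nat.sub_lt (by omega) (by norm_num)
      calc ((2 ^ n - 1 : ℕ) : ℕ∞) < ((2 ^ n : ℕ) : ℕ∞) := h1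
        _ = 2 ^ n := by push_cast; rfl
    rw [growth] at hlt
    obtain ⟨xs, hxs⟩ := lt_iSup_iff.1 hlt
    have h2n : ((2 ^ n : ℕ) : ℕ∞) ≤ ((fun f => fun i => f (xs i)) '' binClass F').encard := by
      have h2 := Order.add_one_le_of_lt hxs
      calc ((2 ^ n : ℕ) : ℕ∞) = ((2 ^ n - 1 : ℕ) : ℕ∞) + 1 := by
            have h3 : (2 ^ n - 1 : ℕ) + 1 = 2 ^ n := by
              have := Nat.one_le_two_pow (n := n)
              omega
            exact_mod_cast h3.symm
        _ ≤ _ := h2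
    -- repackage the sample points
    set str : Fin n → NEStr (Fin a → X) := fun i => ((xs i).1 : {w' : NEStr (Fin a → X) // (NEStr.toList w').length ≤ M}).1 with hstrdef
    set ys : Fin n → Γ := fun i => (xs i).2 with hysdef
    have hstr : ∀ i, ((str i).toList).length ≤ M := fun i => (xs i).1.2
    set autPat := (fun A => fun i => FAut.run A (str i)) '' autClass Φ Δ Θ with hautPat
    have himg : (fun f => fun i => f (xs i)) '' binClass F'
        = (fun v : Fin n → Γ => fun i => (v i = ys i)) '' autPat := by
      rw [hautPat, hF', restrictLen, binClass, Set.image_image, Set.image_image,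
        Set.image_image, Set.image_image]
    -- numeric chain in ℕ∞ and ℕ
    have hfin : autPat.Finite := Set.toFinite _
    have hcardle : ((2 ^ n : ℕ) : ℕ∞) ≤ (autPat.ncard : ℕ∞) := by
      calc ((2 ^ n : ℕ) : ℕ∞) ≤ ((fun f => fun i => f (xs i)) '' binClass F').encard := h2n
        _ = ((fun v : Fin n → Γ => fun i => (v i = ys i)) '' autPat).encard := by rw [himg]
        _ ≤ autPat.encard := Set.encard_image_le _ _
        _ = (autPat.ncard : ℕ∞) := by
            have h4 : autPat.ncard = hfin.toFinset.card := by
              rw [← Set.ncard_coe_finset, hfin.coe_toFinset]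
            rw [Set.Finite.encard_eq_coe_toFinset_card hfin, h4]
    have hcard : 2 ^ n ≤ autPat.ncard := by exact_mod_cast hcardle
    -- nonemptiness consequences
    have hApos : (autClass (X := X) (a := a) Φ Δ Θ).Nonempty := by
      rcases Set.eq_empty_or_nonempty (autClass (X := X) (a := a) Φ Δ Θ) with hemp | h
      · exfalso
        have hpe : autPat = ∅ := by rw [hautPat, hemp, Set.image_empty]
        rw [hpe, Set.ncard_empty] at hcard
        have := Nat.one_le_two_pow (n := n)
        omega
      · exact h
    obtain ⟨A0, hA0⟩ := hApos
    haveI hPiNe : Nonempty Pi := ⟨A0.φ (proj A0.J A0.hJ (str ⟨0, hn1⟩).1)⟩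
    haveI hΓNe : Nonempty Γ := ⟨ys ⟨0, hn1⟩⟩
    have hp1 : 1 ≤ Nat.card Pi := Nat.card_pos
    have hg1 : 1 ≤ Nat.card Γ := Nat.card_pos
    have hma : m ≤ a := by
      have := Finset.card_le_univ A0.J
      rw [A0.hJ] at this
      simpa using this
    have hC1 : 1 ≤ Nat.choose a m := Nat.choose_pos hma
    have hD1 : 1 ≤ Δ.ncard := by
      rw [Nat.succ_le_iff]
      exact (Set.ncard_pos hΔ).2 ⟨A0.sa, hA0.2.1⟩
    -- the counting bound
    have hcount : 2 ^ n ≤ Nat.choose a m * Δ.ncard * (n * M * Nat.card Pi + 1) ^ dΦ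
        * (n * Nat.card Γ + 1) ^ dΘ :=
      le_trans hcard
        (main_count Φ Δ Θ hΔ dΦ dΘ hΦdim hΘdim M n hM hn1 str hstr)
    rw [hR]
    exact real_endgame n (Nat.choose a m) Δ.ncard M (Nat.card Pi) (Nat.card Γ) dΦ dΘ
      hC1 hD1 hM hp1 hg1 hn1 w hw hw2 hcount
  -- conclude via the floor of R
  have hvc : gdim F' ≤ ((Nat.floor R : ℕ) : ℕ∞) := by
    rw [gdim, vcDim]
    apply iSup₂_le
    intro n hn
    exact_mod_cast Nat.le_floor (hkey n hn)
  calc (gdim F' : ENNReal) ≤ (((Nat.floor R : ℕ) : ℕ∞) : ENNReal) :=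
        ENat.toENNReal_le.2 hvc
    _ = ((Nat.floor R : ℕ) : ENNReal) := ENat.toENNReal_coe _
    _ = ENNReal.ofReal ((Nat.floor R : ℕ) : ℝ) := (ENNReal.ofReal_natCast _).symm
    _ ≤ ENNReal.ofReal R := ENNReal.ofReal_le_ofReal (Nat.floor_le hR0)
end
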